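/- Let q, q' be positive integers, set p = gcd(q', q), q'₀ = q'/p, q₀ = q/p, and 𝔮 = q'·q/p. Let a, a' be integers with gcd(a,q) = gcd(a',q') = 1, and let x, X, y, Y, t, T be integers satisfying a'·q₀·x − a·q'₀·y ≡ t (mod 𝔮) and a'·q₀·X − a·q'₀·Y ≡ T (mod 𝔮). Then q'₀ divides x·T − X·t and q₀ divides y·T − Y·t. -/

import Mathlib

theorem stmt_5 (q q' : ℤ) (hq : 0 < q) (hq' : 0 < q')
    (a a' x X y Y t T : ℤ)
    (ha : Int.gcd a q = 1) (ha' : Int.gcd a' q' = 1)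
    (h1 : (q' * q / (Int.gcd q' q : ℤ)) ∣
      (a' * (q / (Int.gcd q' q : ℤ)) * x - a * (q' / (Int.gcd q' q : ℤ)) * y - t))
    (h2 : (q' * q / (Int.gcd q' q : ℤ)) ∣
      (a' * (q / (Int.gcd q' q : ℤ)) * X - a * (q' / (Int.gcd q' q : ℤ)) * Y - T)) :
    (q' / (Int.gcd q' q : ℤ)) ∣ (x * T - X * t) ∧
    (q / (Int.gcd q' q : ℤ)) ∣ (y * T - Y * t) := by
  set p : ℤ := (Int.gcd q' q : ℤ) with hp
  have hp0 : p ≠ 0 := by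
    have : Int.gcd q' q ≠ 0 := by
      simp [Int.gcd_eq_zero_iff]
      intro h; omega
    simp only [hp]; exact_mod_cast this
  obtain ⟨m, hm⟩ : p ∣ q' := Int.gcd_dvd_left q' q
  obtain ⟨n, hn⟩ : p ∣ q := Int.gcd_dvd_right q' q
  have e1 : q' / p = m := by rw [hm, Int.mul_ediv_cancel_left _ hp0]
  have e2 : q / p = n := by rw [hn, Int.mul_ediv_cancel_left _ hp0]
  have e3 : q' * q / p = m * (p * n) := by
    rw [hm, hn, show p * m * (p * n) = p * (m * (p * n)) by ring,
      Int.mul_ediv_cancel_left _ hp0]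
  rw [e1, e2, e3] at h1 h2
  rw [e1, e2]
  have hm1 : m ∣ a' * n * x - a * m * y - t := dvd_trans ⟨p * n, e3 ▸ rfl⟩ h1
  have hm2 : m ∣ a' * n * X - a * m * Y - T := dvd_trans ⟨p * n, rfl⟩ h2
  have hn1 : n ∣ a' * n * x - a * m * y - t := dvd_trans ⟨m * p, by ring⟩ h1
  have hn2 : n ∣ a' * n * X - a * m * Y - T := dvd_trans ⟨m * p, by ring⟩ h2
  constructor
  · have h : x * (a' * n * X - a * m * Y - T) - X * (a' * n * x - a * m * y - t)
        + m * (a * x * Y) - m * (a * X * y) = -(x * T - X * t) := by ring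
    have : m ∣ -(x * T - X * t) := by
      rw [← h]
      exact dvd_sub (dvd_add (dvd_sub (hm2.mul_left x) (hm1.mul_left X)) (Dvd.intro _ rfl))
        (Dvd.intro _ rfl)
    exact dvd_neg.mp this
  · have h : y * (a' * n * X - a * m * Y - T) - Y * (a' * n * x - a * m * y - t)
        - n * (a' * y * X) + n * (a' * Y * x) = -(y * T - Y * t) := by ring
    have : n ∣ -(y * T - Y * t) := by
      rw [← h]
      exact dvd_add (dvd_sub (dvd_sub (hn2.mul_left y) (hn1.mul_left Y)) (Dvd.intro _ rfl))
        (Dvd.intro _ rfl)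
    exact dvd_neg.mp this
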